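/- Let k be a field of characteristic 2, G = ℤ/2ℤ × ℤ/2ℤ with generators x, y, and J an n×n matrix over k. Let M_n(J) be the 2n-dimensional kG-module on which x acts by the block matrix [[I, I],[0, I]] and y acts by [[I, J],[0, I]]. Then there is a surjective kG-module homomorphism ε : (kG)ⁿ → M_n(J) whose kernel is isomorphic to M_n(J). -/

import Mathlib

set_option linter.unusedSectionVars false
set_option maxHeartbeats 1000000
set_option maxRecDepth 8000
set_option synthInstance.maxHeartbeats 400000

namespace KleinFourAux

abbrev G := Multiplicative (ZMod 2 × ZMod 2)

def g00 : G := Multiplicative.ofAdd ((0 : ZMod 2), (0 : ZMod 2))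
def g10 : G := Multiplicative.ofAdd ((1 : ZMod 2), (0 : ZMod 2))
def g01 : G := Multiplicative.ofAdd ((0 : ZMod 2), (1 : ZMod 2))
def g11 : G := Multiplicative.ofAdd ((1 : ZMod 2), (1 : ZMod 2))

section
variable (k : Type) [Field k] [CharP k 2]

abbrev A := MonoidAlgebra k G

instance : CoeFun (A k) (fun _ => G → k) := ⟨fun r => r.coeff⟩

local notation "X" => MonoidAlgebra.of k G g10
local notation "Y" => MonoidAlgebra.of k G g01

lemma hX2 : X * X = 1 := by
  rw [← map_mul, show g10 * g10 = 1 from by decide, map_one]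
lemma hY2 : Y * Y = 1 := by
  rw [← map_mul, show g01 * g01 = 1 from by decide, map_one]
lemma hXY : X * Y = MonoidAlgebra.of k G g11 := by
  rw [← map_mul, show g10 * g01 = g11 from by decide]

lemma two_eq_zero : (2 : A k) = 0 := by
  have h2 : (2:k) = 0 := by
    have := CharP.cast_eq_zero k 2; exact_mod_cast this
  rw [← map_ofNat (algebraMap k (A k)) 2, h2, map_zero]

lemma hXaa : X * (X - 1) = X - 1 := by
  have h1 := hX2 k; have h2 := two_eq_zero k
  linear_combination h1 + (1 - X) * h2
lemma hXbb : X * (Y - 1) = (X-1)*(Y-1) + (Y - 1) := by ring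
lemma hXab : X * ((X-1)*(Y-1)) = (X-1)*(Y-1) := by
  have h1 := hXaa k
  linear_combination (Y-1) * h1
lemma hYbb : Y * (Y - 1) = Y - 1 := by
  have h1 := hY2 k; have h2 := two_eq_zero k
  linear_combination h1 + (1 - Y) * h2
lemma hYaa : Y * (X - 1) = (X-1)*(Y-1) + (X - 1) := by ring
lemma hYab : Y * ((X-1)*(Y-1)) = (X-1)*(Y-1) := by
  have h1 := hYbb k
  linear_combination (X-1) * h1

lemma ab_expand : (X - 1) * (Y - 1)
    = MonoidAlgebra.of k G g11 - X - Y + 1 := by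
  have h1 := hXY k; linear_combination h1

lemma decomp (r : A k) : r = r g00 • (1 : A k) + r g10 • X
    + r g01 • Y + r g11 • (MonoidAlgebra.of k G g11) := by
  have huniv : (Finset.univ : Finset G) = {g00, g10, g01, g11} := by decide
  apply MonoidAlgebra.coeff_injective
  simp only [MonoidAlgebra.coeff_add, MonoidAlgebra.coeff_smul]
  conv_lhs => rw [← Finsupp.sum_single r.coeff]
  rw [Finsupp.sum_fintype _ _ (fun g => Finsupp.single_zero g), huniv]
  rw [Finset.sum_insert (by decide), Finset.sum_insert (by decide),
    Finset.sum_insert (by decide), Finset.sum_singleton]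
  simp only [MonoidAlgebra.of_apply, MonoidAlgebra.one_def, MonoidAlgebra.smul_single',
    mul_one, show (1:G) = g00 from by decide, MonoidAlgebra.coeff_single, Finsupp.smul_single']
  abel

lemma coeffs (c1 c2 c3 : k)
    (h : c1 • (X - 1) + c2 • (Y - 1) + c3 • ((X-1)*(Y-1)) = 0) :
    c1 = 0 ∧ c2 = 0 ∧ c3 = 0 := by
  rw [ab_expand] at h
  simp only [MonoidAlgebra.of_apply, MonoidAlgebra.one_def] at h
  have h' : c1 • (Finsupp.single g10 (1:k) - Finsupp.single 1 1) +
          c2 • (Finsupp.single g01 (1:k) - Finsupp.single 1 1) +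
        c3 • (Finsupp.single g11 (1:k) - Finsupp.single g10 1 - Finsupp.single g01 1 +
            Finsupp.single 1 1) = 0 := congrArg MonoidAlgebra.coeff h
  have e11 := DFunLike.congr_fun h' g11
  have e10 := DFunLike.congr_fun h' g10
  have e01 := DFunLike.congr_fun h' g01
  simp only [Finsupp.add_apply, Finsupp.sub_apply, Finsupp.smul_apply, Finsupp.single_apply,
    Finsupp.coe_zero, Pi.zero_apply, smul_eq_mul,
    show ¬ ((g10:G) = g11) from by decide, show ¬ ((g01:G) = g11) from by decide,
    show ¬ ((1:G) = g11) from by decide, show ¬ ((g01:G) = g10) from by decide,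
    show ¬ ((1:G) = g10) from by decide, show ¬ ((g11:G) = g10) from by decide,
    show ¬ ((g10:G) = g01) from by decide, show ¬ ((1:G) = g01) from by decide,
    show ¬ ((g11:G) = g01) from by decide,
    if_true, if_false, ite_true, ite_false] at e11 e10 e01
  have h3 : c3 = 0 := by simpa using e11
  subst h3
  constructor
  · simpa using e10
  constructor
  · simpa using e01
  · rfl

-- module side
variable (n : ℕ) (J : Matrix (Fin n) (Fin n) k)
variable [Module (A k) ((Fin n → k) × (Fin n → k))] [IsScalarTower k (A k) ((Fin n → k) × (Fin n → k))]
variable (hx : ∀ v w : Fin n → k, MonoidAlgebra.of k G g10 • ((v, w) : (Fin n → k) × (Fin n → k)) = (v + w, w))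
variable (hy : ∀ v w : Fin n → k, MonoidAlgebra.of k G g01 • ((v, w) : (Fin n → k) × (Fin n → k)) = (v + J.mulVec w, w))

include hx hy

lemma sa (v w : Fin n → k) : (X - 1) • ((v, w) : (Fin n → k) × (Fin n → k)) = (w, 0) := by
  rw [sub_smul, one_smul, hx]
  ext <;> simp

lemma sb (v w : Fin n → k) : (Y - 1) • ((v, w) : (Fin n → k) × (Fin n → k)) = (J.mulVec w, 0) := by
  rw [sub_smul, one_smul, hy]
  ext <;> simp

lemma sab (v w : Fin n → k) : ((X - 1) * (Y - 1)) • ((v, w) : (Fin n → k) × (Fin n → k)) = 0 := by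
  rw [mul_smul, sb k n J hx hy, sa k n J hx hy]
  ext <;> simp

lemma s11 (v w : Fin n → k) : (MonoidAlgebra.of k G g11) • ((v, w) : (Fin n → k) × (Fin n → k))
    = (v + J.mulVec w + w, w) := by
  rw [← hXY, mul_smul, hy, hx]

lemma smul_pair (r : A k) (v w : Fin n → k) :
    r • ((v, w) : (Fin n → k) × (Fin n → k)) =
      (r g00 • v + r g10 • (v + w) + r g01 • (v + J.mulVec w) + r g11 • (v + J.mulVec w + w),
       (r g00 + r g10 + r g01 + r g11) • w) := by
  conv_lhs => rw [decomp k r]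
  rw [add_smul, add_smul, add_smul, smul_assoc, smul_assoc, smul_assoc, smul_assoc,
    one_smul, hx, hy, s11 k n J hx hy]
  ext i <;> simp [add_smul] <;> ring


omit hx hy in
lemma sum_single_smul (c : Fin n → k) :
    ∑ i, c i • (Pi.single i (1:k) : Fin n → k) = c := by
  have : ∀ i, c i • (Pi.single i (1:k) : Fin n → k) = Pi.single i (c i) := by
    intro i
    rw [← Pi.single_smul, smul_eq_mul, mul_one]
  simp_rw [this]
  exact Finset.univ_sum_single c

omit hx hy in
lemma sum_single_smul_mulVec (c : Fin n → k) :
    ∑ i, c i • J.mulVec (Pi.single i (1:k)) = J.mulVec c := by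
  have h : ∀ x, J.mulVec x = J.mulVecLin x := fun x => (Matrix.mulVecLin_apply _ _).symm
  simp_rw [h, ← LinearMap.map_smul, ← map_sum, sum_single_smul]

omit hx hy in
noncomputable def eps : (Fin n → A k) →ₗ[A k] ((Fin n → k) × (Fin n → k)) where
  toFun f := ∑ i, f i • ((0, Pi.single i 1) : (Fin n → k) × (Fin n → k))
  map_add' f g := by simp [add_smul, Finset.sum_add_distrib]
  map_smul' r f := by simp [Finset.smul_sum, mul_smul]

lemma eps_apply (f : Fin n → A k) :
    eps k n f = ((fun j => f j g10 + f j g11) + J.mulVec (fun j => f j g01 + f j g11),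
      fun j => f j g00 + f j g10 + f j g01 + f j g11) := by
  show (∑ i, f i • ((0, Pi.single i 1) : (Fin n → k) × (Fin n → k))) = _
  have hterm : ∀ i, f i • ((0, Pi.single i 1) : (Fin n → k) × (Fin n → k)) =
      (f i g10 • (Pi.single i (1:k) : Fin n → k) + f i g01 • J.mulVec (Pi.single i (1:k))
        + f i g11 • J.mulVec (Pi.single i (1:k)) + f i g11 • (Pi.single i (1:k) : Fin n → k),
       (f i g00 + f i g10 + f i g01 + f i g11) • (Pi.single i (1:k) : Fin n → k)) := by
    intro i
    rw [smul_pair k n J hx hy]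
    ext j <;> simp <;> ring
  simp_rw [hterm]
  ext j
  · simp only [Prod.fst_sum, Finset.sum_add_distrib, sum_single_smul, sum_single_smul_mulVec,
      Prod.fst_add, Matrix.mulVec_add]
    simp [Matrix.mulVec, dotProduct, mul_add, Finset.sum_add_distrib]
    ring
  · simp only [Prod.snd_sum, sum_single_smul]

lemma eps_surj : Function.Surjective (eps k n :
    (Fin n → A k) →ₗ[A k] ((Fin n → k) × (Fin n → k))) := by
  rintro ⟨v, w⟩
  refine ⟨fun i => w i • 1 + v i • (X - 1), ?_⟩
  show (∑ i, _ • ((0, Pi.single i 1) : (Fin n → k) × (Fin n → k))) = _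
  have hterm : ∀ i, (w i • 1 + v i • (X - 1)) • ((0, Pi.single i 1) : (Fin n → k) × (Fin n → k))
      = (v i • (Pi.single i (1:k) : Fin n → k), w i • (Pi.single i (1:k) : Fin n → k)) := by
    intro i
    rw [add_smul, smul_assoc, smul_assoc, one_smul, sa k n J hx hy]
    ext j <;> simp
  simp_rw [hterm]
  ext j
  · simp [Prod.fst_sum, sum_single_smul, Pi.single_apply, Finset.sum_ite_eq, Finset.sum_ite_eq']
  · simp [Prod.snd_sum, sum_single_smul, Pi.single_apply, Finset.sum_ite_eq, Finset.sum_ite_eq']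

omit hx hy in
noncomputable def psik : ((Fin n → k) × (Fin n → k)) →ₗ[k] (Fin n → A k) where
  toFun p := fun i => (J.mulVec p.2) i • (X - 1) + p.2 i • (Y - 1) + p.1 i • ((X-1)*(Y-1))
  map_add' p q := by
    funext i
    simp only [Prod.fst_add, Prod.snd_add, Matrix.mulVec_add, Pi.add_apply, add_smul]
    module
  map_smul' c p := by
    funext i
    rw [RingHom.id_apply, Pi.smul_apply]
    show (J.mulVec (c • p.2)) i • (X - 1) + (c • p.2) i • (Y - 1)
        + (c • p.1) i • ((X-1)*(Y-1)) = _
    rw [Matrix.mulVec_smul, Pi.smul_apply, Pi.smul_apply, Pi.smul_apply,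
      smul_eq_mul, smul_eq_mul, smul_eq_mul, mul_smul, mul_smul, mul_smul,
      smul_add, smul_add]

omit hx hy in
lemma psik_apply (p : (Fin n → k) × (Fin n → k)) (i : Fin n) :
    psik k n J p i = (J.mulVec p.2) i • (X - 1) + p.2 i • (Y - 1) + p.1 i • ((X-1)*(Y-1)) := rfl


omit hx hy in
lemma coeff_vals (c1 c2 c3 : k) (g : G) :
    (c1 • (X - 1) + c2 • (Y - 1) + c3 • ((X-1)*(Y-1))) g
      = (c1 • (Finsupp.single g10 (1:k) - Finsupp.single 1 1) +
          c2 • (Finsupp.single g01 (1:k) - Finsupp.single 1 1) +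
        c3 • (Finsupp.single g11 (1:k) - Finsupp.single g10 1 - Finsupp.single g01 1 +
            Finsupp.single 1 1) : G →₀ k) g := by
  rw [ab_expand]
  rfl

omit hx hy in
lemma coeff_g00 (c1 c2 c3 : k) :
    (c1 • (X - 1) + c2 • (Y - 1) + c3 • ((X-1)*(Y-1))) g00 = -c1 - c2 + c3 := by
  rw [coeff_vals]
  simp only [Finsupp.add_apply, Finsupp.sub_apply, Finsupp.smul_apply, Finsupp.single_apply,
    smul_eq_mul, show ((1:G) = g00) from by decide, show ¬ ((g10:G) = g00) from by decide,
    show ¬ ((g01:G) = g00) from by decide, show ¬ ((g11:G) = g00) from by decide,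
    if_true, if_false, ite_true, ite_false, if_pos rfl]
  ring

omit hx hy in
lemma coeff_g10 (c1 c2 c3 : k) :
    (c1 • (X - 1) + c2 • (Y - 1) + c3 • ((X-1)*(Y-1))) g10 = c1 - c3 := by
  rw [coeff_vals]
  simp only [Finsupp.add_apply, Finsupp.sub_apply, Finsupp.smul_apply, Finsupp.single_apply,
    smul_eq_mul, show ¬ ((1:G) = g10) from by decide, show ¬ ((g01:G) = g10) from by decide,
    show ¬ ((g11:G) = g10) from by decide, if_true, if_false, ite_true, ite_false, if_pos rfl]
  ring

omit hx hy in
lemma coeff_g01 (c1 c2 c3 : k) :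
    (c1 • (X - 1) + c2 • (Y - 1) + c3 • ((X-1)*(Y-1))) g01 = c2 - c3 := by
  rw [coeff_vals]
  simp only [Finsupp.add_apply, Finsupp.sub_apply, Finsupp.smul_apply, Finsupp.single_apply,
    smul_eq_mul, show ¬ ((1:G) = g01) from by decide, show ¬ ((g10:G) = g01) from by decide,
    show ¬ ((g11:G) = g01) from by decide, if_true, if_false, ite_true, ite_false, if_pos rfl]
  ring

omit hx hy in
lemma coeff_g11 (c1 c2 c3 : k) :
    (c1 • (X - 1) + c2 • (Y - 1) + c3 • ((X-1)*(Y-1))) g11 = c3 := by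
  rw [coeff_vals]
  simp only [Finsupp.add_apply, Finsupp.sub_apply, Finsupp.smul_apply, Finsupp.single_apply,
    smul_eq_mul, show ¬ ((1:G) = g11) from by decide, show ¬ ((g10:G) = g11) from by decide,
    show ¬ ((g01:G) = g11) from by decide, if_true, if_false, ite_true, ite_false, if_pos rfl]
  ring

lemma psik_X (p : (Fin n → k) × (Fin n → k)) :
    psik k n J (MonoidAlgebra.of k G g10 • p) = MonoidAlgebra.of k G g10 • psik k n J p := by
  have hXp : MonoidAlgebra.of k G g10 • p = (p.1 + p.2, p.2) := by
    conv_lhs => rw [← Prod.mk.eta (p := p)]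
    rw [hx]
  rw [hXp]
  funext i
  rw [Pi.smul_apply, smul_eq_mul, psik_apply, psik_apply]
  rw [mul_add, mul_add, mul_smul_comm, mul_smul_comm, mul_smul_comm,
    hXaa, hXbb, hXab]
  simp only [Pi.add_apply]
  module

lemma psik_Y (p : (Fin n → k) × (Fin n → k)) :
    psik k n J (MonoidAlgebra.of k G g01 • p) = MonoidAlgebra.of k G g01 • psik k n J p := by
  have hYp : MonoidAlgebra.of k G g01 • p = (p.1 + J.mulVec p.2, p.2) := by
    conv_lhs => rw [← Prod.mk.eta (p := p)]
    rw [hy]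
  rw [hYp]
  funext i
  rw [Pi.smul_apply, smul_eq_mul, psik_apply, psik_apply]
  rw [mul_add, mul_add, mul_smul_comm, mul_smul_comm, mul_smul_comm,
    hYaa, hYbb, hYab]
  simp only [Pi.add_apply]
  module

lemma psik_11 (p : (Fin n → k) × (Fin n → k)) :
    psik k n J (MonoidAlgebra.of k G g11 • p) = MonoidAlgebra.of k G g11 • psik k n J p := by
  rw [← hXY, mul_smul, psik_X k n J hx hy, psik_Y k n J hx hy, mul_smul]

noncomputable def psiA : ((Fin n → k) × (Fin n → k)) →ₗ[A k] (Fin n → A k) where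
  toFun := psik k n J
  map_add' := (psik k n J).map_add
  map_smul' r p := by
    rw [RingHom.id_apply]
    show psik k n J (r • p) = r • psik k n J p
    have hr : r • p = r g00 • p + r g10 • (MonoidAlgebra.of k G g10 • p)
        + r g01 • (MonoidAlgebra.of k G g01 • p)
        + r g11 • (MonoidAlgebra.of k G g11 • p) := by
      conv_lhs => rw [decomp k r]
      rw [add_smul, add_smul, add_smul, smul_assoc, smul_assoc, smul_assoc, smul_assoc, one_smul]
    rw [hr, map_add, map_add, map_add, (psik k n J).map_smul, (psik k n J).map_smul,
      (psik k n J).map_smul, (psik k n J).map_smul,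
      psik_X k n J hx hy, psik_Y k n J hx hy, psik_11 k n J hx hy]
    conv_rhs => rw [decomp k r]
    rw [add_smul, add_smul, add_smul, smul_assoc, smul_assoc, smul_assoc, smul_assoc, one_smul]

lemma eps_psik (p : (Fin n → k) × (Fin n → k)) : eps k n (psik k n J p) = 0 := by
  rw [eps_apply k n J hx hy]
  have h2 : (2:k) = 0 := by
    have := CharP.cast_eq_zero k 2; exact_mod_cast this
  have h00 : ∀ j, psik k n J p j g00 = -((J.mulVec p.2) j) - p.2 j + p.1 j :=
    fun j => coeff_g00 k _ _ _
  have h10 : ∀ j, psik k n J p j g10 = (J.mulVec p.2) j - p.1 j :=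
    fun j => coeff_g10 k _ _ _
  have h01 : ∀ j, psik k n J p j g01 = p.2 j - p.1 j :=
    fun j => coeff_g01 k _ _ _
  have h11 : ∀ j, psik k n J p j g11 = p.1 j :=
    fun j => coeff_g11 k _ _ _
  have harg : (fun j => (p.2 j - p.1 j) + p.1 j) = p.2 := by funext j; ring
  ext j
  · simp only [Pi.add_apply, h10, h01, h11, harg, Prod.fst_zero, Pi.zero_apply]
    linear_combination (J.mulVec p.2 j) * h2
  · simp only [h00, h10, h01, h11, Prod.snd_zero, Pi.zero_apply]
    ring

omit hx hy in
lemma psik_inj (p : (Fin n → k) × (Fin n → k)) (h : psik k n J p = 0) : p = 0 := by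
  have hc : ∀ i, (J.mulVec p.2) i = 0 ∧ p.2 i = 0 ∧ p.1 i = 0 := fun i =>
    coeffs k _ _ _ (congrFun h i)
  refine Prod.ext_iff.mpr ⟨funext fun i => (hc i).2.2, funext fun i => (hc i).2.1⟩

lemma psik_surj (f : Fin n → A k) (hf : eps k n f = 0) :
    psik k n J (fun j => f j g11, fun j => f j g01 + f j g11) = f := by
  rw [eps_apply k n J hx hy] at hf
  have h2 : (2:k) = 0 := by
    have := CharP.cast_eq_zero k 2; exact_mod_cast this
  have hfst := congrArg Prod.fst hf
  have hsnd := congrArg Prod.snd hf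
  simp only [Prod.fst_zero, Prod.snd_zero] at hfst hsnd
  funext i
  have hJw : J.mulVec (fun j => f j g01 + f j g11) i = f i g10 + f i g11 := by
    have h1 := congrFun hfst i
    simp only [Pi.add_apply, Pi.zero_apply] at h1
    linear_combination h1 - (f i g10 + f i g11) * h2
  have hc00 : f i g00 = -(f i g10 + f i g01 + f i g11) := by
    have h1 := congrFun hsnd i
    simp only [Pi.zero_apply] at h1
    linear_combination h1
  show J.mulVec (fun j => f j g01 + f j g11) i • (X - 1)
      + (f i g01 + f i g11) • (Y - 1) + f i g11 • ((X-1)*(Y-1)) = f i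
  rw [hJw]
  conv_rhs => rw [decomp k (f i)]
  rw [hc00, ab_expand]
  module

lemma main :
    ∃ ε : (Fin n → A k) →ₗ[A k] ((Fin n → k) × (Fin n → k)),
      Function.Surjective ε ∧
        Nonempty ((LinearMap.ker ε) ≃ₗ[A k] ((Fin n → k) × (Fin n → k))) := by
  refine ⟨eps k n, eps_surj k n J hx hy, ?_⟩
  have hker : ∀ p : (Fin n → k) × (Fin n → k),
      psiA k n J hx hy p ∈ LinearMap.ker (eps k n) := fun p => by
    rw [LinearMap.mem_ker]
    exact eps_psik k n J hx hy p
  let Φ := LinearMap.codRestrict (LinearMap.ker (eps k n)) (psiA k n J hx hy) hker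
  have hinj : Function.Injective Φ := by
    intro p q hpq
    have hval : psik k n J p = psik k n J q := congrArg Subtype.val hpq
    have h0 : psik k n J (p - q) = 0 := by
      rw [map_sub, sub_eq_zero]; exact hval
    exact sub_eq_zero.mp (psik_inj k n J (p - q) h0)
  have hsurj : Function.Surjective Φ := by
    rintro ⟨z, hz⟩
    rw [LinearMap.mem_ker] at hz
    refine ⟨(fun j => z j g11, fun j => z j g01 + z j g11), ?_⟩
    apply Subtype.ext
    exact psik_surj k n J hx hy z hz
  exact ⟨(LinearEquiv.ofBijective Φ ⟨hinj, hsurj⟩).symm⟩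

end
end KleinFourAux


/-- Let `k` have characteristic 2, `G = ℤ/2 × ℤ/2` with generators `x`, `y`, and `J` an `n × n`
matrix over `k`. Let `M_n(J)` be the `2n`-dimensional `kG`-module `(Fin n → k) × (Fin n → k)` on
which `x` acts by `[[I, I], [0, I]]` and `y` acts by `[[I, J], [0, I]]`. Then there is a
surjective `kG`-linear map `ε : (kG)ⁿ → M_n(J)` whose kernel is isomorphic to `M_n(J)`. -/
theorem klein_four_even_module_periodic
    (k : Type) [Field k] [CharP k 2] (n : ℕ) (J : Matrix (Fin n) (Fin n) k)
    [Module (MonoidAlgebra k (Multiplicative (ZMod 2 × ZMod 2)))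
      ((Fin n → k) × (Fin n → k))]
    [IsScalarTower k (MonoidAlgebra k (Multiplicative (ZMod 2 × ZMod 2)))
      ((Fin n → k) × (Fin n → k))]
    (hx : ∀ v w : Fin n → k,
      (MonoidAlgebra.of k (Multiplicative (ZMod 2 × ZMod 2))
          (Multiplicative.ofAdd ((1 : ZMod 2), (0 : ZMod 2)))) •
        ((v, w) : (Fin n → k) × (Fin n → k)) = (v + w, w))
    (hy : ∀ v w : Fin n → k,
      (MonoidAlgebra.of k (Multiplicative (ZMod 2 × ZMod 2))
          (Multiplicative.ofAdd ((0 : ZMod 2), (1 : ZMod 2)))) •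
        ((v, w) : (Fin n → k) × (Fin n → k)) = (v + J.mulVec w, w)) :
    ∃ ε : (Fin n → MonoidAlgebra k (Multiplicative (ZMod 2 × ZMod 2)))
        →ₗ[MonoidAlgebra k (Multiplicative (ZMod 2 × ZMod 2))]
        ((Fin n → k) × (Fin n → k)),
      Function.Surjective ε ∧
        Nonempty ((LinearMap.ker ε)
          ≃ₗ[MonoidAlgebra k (Multiplicative (ZMod 2 × ZMod 2))]
          ((Fin n → k) × (Fin n → k))) := by
  exact KleinFourAux.main k n J hx hy
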